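/- Under the Pólya urn hypotheses, assume moreover that λ₁ = b is an eigenvalue of A of algebraic multiplicity 1. Then for every n ≥ 0, P_{λ₁}(X_n − E X_n) = 0 almost surely, where P_{λ₁} is the spectral projection of A (extended complex-linearly to ℂ^q ⊇ ℝ^q) for the eigenvalue λ₁. -/

import Mathlib

open MeasureTheory Matrix Filter

/-- `P` is the spectral projection of `A` for the eigenvalue `lam`: it is the identity
on the generalized eigenspace E_lam = ker((A − lam I)^q) and vanishes on the generalized
eigenspace E_mu = ker((A − mu I)^q) of every other eigenvalue `mu`. Since ℂ^q is the
direct sum of the generalized eigenspaces, these conditions determine `P` uniquely. -/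
def IsSpectralProj {q : ℕ} (A : Matrix (Fin q) (Fin q) ℂ) (lam : ℂ)
    (P : Matrix (Fin q) (Fin q) ℂ) : Prop :=
  (∀ v : Fin q → ℂ, ((A - lam • 1) ^ q).mulVec v = 0 → P.mulVec v = v) ∧
  ∀ mu : ℂ, mu ≠ lam → ∀ v : Fin q → ℂ, ((A - mu • 1) ^ q).mulVec v = 0 → P.mulVec v = 0

/-- `ν` is the nilpotency index ν_lam of N_lam := (A − lam I) P_lam, i.e. the unique
integer ν ≥ 0 with N_lam^(ν+1) = 0 and (ν = 0 or N_lam^ν ≠ 0). -/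
def NilIndexOf {q : ℕ} (A : Matrix (Fin q) (Fin q) ℂ) (lam : ℂ)
    (P : Matrix (Fin q) (Fin q) ℂ) (ν : ℕ) : Prop :=
  ((A - lam • 1) * P) ^ (ν + 1) = 0 ∧ (ν = 0 ∨ ((A - lam • 1) * P) ^ ν ≠ 0)

open Polynomial Module

lemma charpoly_toLin'_eq {q : ℕ} (M : Matrix (Fin q) (Fin q) ℂ) :
    LinearMap.charpoly (Matrix.toLin' M) = M.charpoly := by
  rw [← LinearMap.charpoly_toMatrix (Matrix.toLin' M) (Pi.basisFun ℂ (Fin q)),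
    LinearMap.toMatrix_eq_toMatrix', LinearMap.toMatrix'_toLin']

lemma charpoly_sub_smul_one {q : ℕ} (M : Matrix (Fin q) (Fin q) ℂ) (c : ℂ) :
    (M - c • 1).charpoly = M.charpoly.comp (X + C c) := by
  have h : (M - c • 1).charmatrix = (M.charmatrix).map (aeval (X + C c)).toRingHom := by
    ext i j
    by_cases hij : i = j
    · subst hij
      simp [charmatrix_apply_eq, Matrix.sub_apply, Matrix.smul_apply, Matrix.one_apply]
      ring
    · simp [charmatrix_apply_ne _ _ _ hij, Matrix.sub_apply, Matrix.smul_apply,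
        Matrix.one_apply_ne hij]
  rw [Matrix.charpoly, h, ← RingHom.mapMatrix_apply, ← RingHom.map_det, Matrix.charpoly,
    comp_eq_aeval]
  rfl

lemma key_spectral {q : ℕ} (B : Matrix (Fin q) (Fin q) ℂ) (aC : Fin q → ℂ) (haC : aC ≠ 0)
    (b : ℂ) (hA : Matrix.vecMul aC B = b • aC)
    (hsimple : Polynomial.rootMultiplicity b B.charpoly = 1)
    (P : Matrix (Fin q) (Fin q) ℂ) (hP : IsSpectralProj B b P)
    (v : Fin q → ℂ) (hv : aC ⬝ᵥ v = 0) : P.mulVec v = 0 := by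
  set f : Module.End ℂ (Fin q → ℂ) := Matrix.toLin' B with hf
  -- applying powers
  have hstep : ∀ (c : ℂ) (x : Fin q → ℂ), (f - c • 1) x = (B - c • 1).mulVec x := by
    intro c x
    simp [hf, Matrix.toLin'_apply, Matrix.sub_mulVec, Matrix.smul_mulVec,
      Matrix.one_mulVec]
  have hpow : ∀ (c : ℂ) (k : ℕ) (x : Fin q → ℂ),
      ((f - c • 1) ^ k) x = ((B - c • 1) ^ k).mulVec x := by
    intro c k
    induction k with
    | zero => intro x; simp [Matrix.one_mulVec]
    | succ k ih =>
      intro x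
      rw [pow_succ, pow_succ, Module.End.mul_apply, hstep, ih, Matrix.mulVec_mulVec]
  have hmem : ∀ (c : ℂ) (x : Fin q → ℂ),
      x ∈ f.maxGenEigenspace c ↔ ((B - c • 1) ^ q).mulVec x = 0 := by
    intro c x
    rw [Module.End.maxGenEigenspace_eq_genEigenspace_finrank,
      Module.End.mem_genEigenspace_nat, LinearMap.mem_ker, hpow]
    simp [Module.finrank_pi]
  have hP1 : ∀ x ∈ f.maxGenEigenspace b, P.mulVec x = x :=
    fun x hx => hP.1 x ((hmem b x).1 hx)
  have hP2 : ∀ c, c ≠ b → ∀ x ∈ f.maxGenEigenspace c, P.mulVec x = 0 :=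
    fun c hc x hx => hP.2 c hc x ((hmem c x).1 hx)
  have hvecMul : ∀ (c : ℂ) (k : ℕ),
      Matrix.vecMul aC ((B - c • 1) ^ k) = ((b - c) ^ k) • aC := by
    intro c k
    induction k with
    | zero => simp [Matrix.vecMul_one]
    | succ k ih =>
      have h1 : Matrix.vecMul aC (B - c • 1) = (b - c) • aC := by
        have h2 : Matrix.vecMul aC ((c : ℂ) • (1 : Matrix (Fin q) (Fin q) ℂ)) = c • aC := by
          ext j
          simp [Matrix.vecMul, dotProduct, Matrix.smul_apply, Matrix.one_apply,
            Finset.mul_sum, mul_ite, Finset.sum_ite_eq, mul_comm]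
        rw [Matrix.vecMul_sub, hA, h2, sub_smul]
      rw [pow_succ, ← Matrix.vecMul_vecMul, ih, Matrix.smul_vecMul, h1, smul_smul, ← pow_succ]
  have hdot : ∀ c, c ≠ b → ∀ x ∈ f.maxGenEigenspace c, aC ⬝ᵥ x = 0 := by
    intro c hc x hx
    have h0 := (hmem c x).1 hx
    have h1 : aC ⬝ᵥ ((B - c • 1) ^ q).mulVec x = 0 := by rw [h0]; simp
    rw [Matrix.dotProduct_mulVec, hvecMul, smul_dotProduct, smul_eq_mul] at h1
    have hbc : (b - c) ^ q ≠ 0 := pow_ne_zero _ (sub_ne_zero.mpr (Ne.symm hc))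
    exact (mul_eq_zero.mp h1).resolve_left hbc
  have htop : ∀ x : Fin q → ℂ, x ∈ ⨆ c, f.maxGenEigenspace c := by
    rw [Module.End.iSup_maxGenEigenspace_eq_top f]
    exact fun x => Submodule.mem_top
  -- dimension one
  have hEb1 : Module.finrank ℂ (f.maxGenEigenspace b) = 1 := by
    have e1 : f.maxGenEigenspace b
        = (f - algebraMap ℂ (Module.End ℂ (Fin q → ℂ)) b).maxGenEigenspace 0 := by
      have : f - algebraMap ℂ (Module.End ℂ (Fin q → ℂ)) b - (0 : ℂ) • 1 = f - b • 1 := by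
        simp [Module.algebraMap_end_eq_smul_id]
        rfl
      ext x
      simp only [Module.End.mem_maxGenEigenspace, this]
    have e2 := LinearMap.finrank_maxGenEigenspace_zero_eq
      (f - algebraMap ℂ (Module.End ℂ (Fin q → ℂ)) b)
    have e3 : f - algebraMap ℂ (Module.End ℂ (Fin q → ℂ)) b = Matrix.toLin' (B - b • 1) := by
      apply LinearMap.ext
      intro x
      have h4 : (f - algebraMap ℂ (Module.End ℂ (Fin q → ℂ)) b) x = (f - b • 1) x := by
        simp [Module.algebraMap_end_apply]
      rw [h4, hstep b x, Matrix.toLin'_apply]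
    rw [e1, e2, e3, charpoly_toLin'_eq, charpoly_sub_smul_one,
      ← Polynomial.rootMultiplicity_eq_natTrailingDegree, hsimple]
  -- a vector in E_b not annihilated by aC
  have hu : ∃ u : Fin q → ℂ, u ∈ f.maxGenEigenspace b ∧ aC ⬝ᵥ u ≠ 0 := by
    by_contra h
    push_neg at h
    apply haC
    have hall : ∀ x : Fin q → ℂ, aC ⬝ᵥ x = 0 := by
      intro x
      refine Submodule.iSup_induction (motive := fun y => aC ⬝ᵥ y = 0) _ (htop x) ?_ (by simp) ?_
      · intro c y hy
        by_cases hc : c = b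
        · exact h y (hc ▸ hy)
        · exact hdot c hc y hy
      · intro y z hy hz
        rw [dotProduct_add, hy, hz, add_zero]
    funext j
    have := hall (Pi.single j 1)
    simpa [dotProduct_single] using this
  obtain ⟨u₀, hu₀mem, hu₀ne⟩ := hu
  have hu₀nz : u₀ ≠ 0 := by
    intro h; apply hu₀ne; rw [h]; simp
  have hspan : ∀ x ∈ f.maxGenEigenspace b, ∃ c : ℂ, x = c • u₀ := by
    intro x hx
    have h1 := (finrank_eq_one_iff_of_nonzero' (⟨u₀, hu₀mem⟩ : f.maxGenEigenspace b)
      (by simpa [Subtype.ext_iff] using hu₀nz)).mp hEb1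
    obtain ⟨c, hc⟩ := h1 ⟨x, hx⟩
    exact ⟨c, by simpa [Subtype.ext_iff, eq_comm] using hc⟩
  -- main induction
  have main : ∀ x : Fin q → ℂ, P.mulVec x = ((aC ⬝ᵥ x) / (aC ⬝ᵥ u₀)) • u₀ := by
    intro x
    refine Submodule.iSup_induction
      (motive := fun y => P.mulVec y = ((aC ⬝ᵥ y) / (aC ⬝ᵥ u₀)) • u₀) _ (htop x) ?_ (by simp) ?_
    · intro c y hy
      by_cases hc : c = b
      · subst hc
        obtain ⟨t, rfl⟩ := hspan y hy
        rw [hP1 _ hy, dotProduct_smul, smul_eq_mul, mul_div_assoc,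
          div_self hu₀ne, mul_one]
      · rw [hP2 c hc y hy, hdot c hc y hy, zero_div, zero_smul]
    · intro y z hy hz
      rw [Matrix.mulVec_add, hy, hz, dotProduct_add, add_div, add_smul]
  rw [main v, hv, zero_div, zero_smul]


/-- Under the Pólya urn hypotheses (q ≥ 2; a'A = b a' with b > 0; (X_n)
adapted and integrable with X₀ deterministic, w₀ := a·X₀ > 0, w_n := w₀ + nb;
a·X_n = w_n a.s.; E[X_{n+1} − X_n | F_n] = w_n⁻¹ A X_n a.s.), assume moreover that
λ₁ = b is an eigenvalue of (the complexification of) A of algebraic multiplicity 1.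
Then for every n ≥ 0, P_{λ₁}(X_n − E X_n) = 0 almost surely, where P_{λ₁} is the
spectral projection of A (extended complex-linearly to ℂ^q) for the eigenvalue λ₁. -/
theorem urn_spectralProj_top_eigenvalue_centered_eq_zero
    (q : ℕ) (hq : 2 ≤ q) {Ω : Type} {m0 : MeasurableSpace Ω}
    (μ : Measure Ω) [IsProbabilityMeasure μ] (ℱ : Filtration ℕ m0)
    (a : Fin q → ℝ) (b : ℝ) (hb : 0 < b)
    (A : Matrix (Fin q) (Fin q) ℝ) (hA : Matrix.vecMul a A = b • a)
    (X : ℕ → Ω → EuclideanSpace ℝ (Fin q)) (hadp : Adapted ℱ X)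
    (hXint : ∀ n, Integrable (X n) μ)
    (x₀ : EuclideanSpace ℝ (Fin q)) (hX0 : X 0 = fun _ => x₀)
    (hw₀ : 0 < ∑ j, a j * x₀ j)
    (hwn : ∀ n : ℕ, ∀ᵐ ω ∂μ, ∑ j, a j * X n ω j = (∑ j, a j * x₀ j) + (n : ℝ) * b)
    (hcond : ∀ n : ℕ, μ[fun ω => X (n + 1) ω - X n ω | ℱ n] =ᵐ[μ]
      fun ω => ((∑ j, a j * x₀ j) + (n : ℝ) * b)⁻¹ • (Matrix.toEuclideanCLM (𝕜 := ℝ) A (X n ω)))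
    (hsimple : Polynomial.rootMultiplicity (b : ℂ)
      (Matrix.charpoly (A.map (fun x : ℝ => (x : ℂ)))) = 1)
    (P : Matrix (Fin q) (Fin q) ℂ)
    (hP : IsSpectralProj (A.map (fun x : ℝ => (x : ℂ))) (b : ℂ) P) :
    ∀ n : ℕ, ∀ᵐ ω ∂μ,
      P.mulVec (fun j => ((X n ω j - (∫ ω', X n ω' ∂μ) j : ℝ) : ℂ)) = 0 := by
  intro n
  set aC : Fin q → ℂ := fun j => ((a j : ℝ) : ℂ) with haCdef
  set w : ℝ := (∑ j, a j * x₀ j) + (n : ℝ) * b with hwdef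
  set m : EuclideanSpace ℝ (Fin q) := ∫ ω', X n ω' ∂μ with hmdef
  have hmj : ∀ j, ∫ ω, X n ω j ∂μ = m j := by
    intro j
    have := ContinuousLinearMap.integral_comp_comm (EuclideanSpace.proj (𝕜 := ℝ) j) (hXint n)
    simpa using this
  have hintj : ∀ j : Fin q, Integrable (fun ω => X n ω j) μ := by
    intro j
    have := ContinuousLinearMap.integrable_comp (EuclideanSpace.proj (𝕜 := ℝ) j) (hXint n)
    simpa using this
  have hsum : ∫ ω, (∑ j, a j * X n ω j) ∂μ = ∑ j, a j * m j := by
    rw [integral_finset_sum _ (fun j _ => (hintj j).const_mul (a j))]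
    refine Finset.sum_congr rfl fun j _ => ?_
    rw [MeasureTheory.integral_const_mul, hmj]
  have hw : ∫ ω, (∑ j, a j * X n ω j) ∂μ = w := by
    rw [integral_congr_ae (hwn n)]
    simp
    rfl
  have hsum_m : ∑ j, a j * m j = w := by rw [← hsum, hw]
  have haC : aC ≠ 0 := by
    intro h0
    have hz : ∀ j, a j = 0 := by
      intro j
      have h1 : ((a j : ℝ) : ℂ) = 0 := by
        have := congrFun h0 j
        simpa [haCdef] using this
      exact_mod_cast h1
    simp [hz] at hw₀
  have hAC : Matrix.vecMul aC (A.map (fun x : ℝ => (x : ℂ))) = (b : ℂ) • aC := by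
    funext j
    have h := congrFun hA j
    simp only [Matrix.vecMul, dotProduct, Pi.smul_apply, smul_eq_mul] at h ⊢
    simp only [Matrix.map_apply, haCdef]
    push_cast
    exact_mod_cast h
  filter_upwards [hwn n] with ω hω
  apply key_spectral (A.map (fun x : ℝ => (x : ℂ))) aC haC (b : ℂ) hAC hsimple P hP
  have hreal : ∑ j, a j * (X n ω j - m j) = 0 := by
    simp only [mul_sub]
    rw [Finset.sum_sub_distrib, hω, hsum_m, sub_self]
  show ∑ j, aC j * ((X n ω j - m j : ℝ) : ℂ) = 0
  have : ((∑ j, a j * (X n ω j - m j) : ℝ) : ℂ) = 0 := by rw [hreal]; norm_num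
  rw [← this]
  push_cast
  rfl
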